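/- Let σ be an m×n real matrix and μ ∈ ℝ^m. The constrained quadratic optimization problem max { πᵀμ − (1/2)πᵀσσᵀπ : π ∈ ℝ^m, πᵀ1 = 1 } admits a maximizer if and only if the vector (μ, 1) ∈ ℝ^(m+1) lies in the column space (image) of the block matrix M = [[σσᵀ, 1],[1ᵀ, 0]], where 1 denotes the all-ones vector in ℝ^m. -/

import Mathlib

open Matrix

/-- Existence of a growth-optimal portfolio: the constrained quadratic problem
`max { πᵀμ − (1/2) πᵀ σ σᵀ π : πᵀ1 = 1 }` admits a maximizer iff the vector `(μ, 1)`
lies in the column space of the KKT block matrix `M = [[σσᵀ, 1], [1ᵀ, 0]]`. -/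
theorem gop_exists_iff_range (m n : ℕ) (σ : Matrix (Fin m) (Fin n) ℝ) (μ : Fin m → ℝ) :
    (∃ π : Fin m → ℝ, π ⬝ᵥ (fun _ => (1 : ℝ)) = 1 ∧
      ∀ π' : Fin m → ℝ, π' ⬝ᵥ (fun _ => (1 : ℝ)) = 1 →
        π' ⬝ᵥ μ - (1 / 2) * (π' ⬝ᵥ ((σ * σᵀ).mulVec π')) ≤
          π ⬝ᵥ μ - (1 / 2) * (π ⬝ᵥ ((σ * σᵀ).mulVec π))) ↔
    Sum.elim μ (fun _ : Unit => (1 : ℝ)) ∈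
      LinearMap.range (Matrix.mulVecLin
        (Matrix.fromBlocks (σ * σᵀ) (Matrix.of fun _ _ => (1 : ℝ))
          (Matrix.of fun _ _ => (1 : ℝ)) (0 : Matrix Unit Unit ℝ))) := by
  set A := σ * σᵀ with hA
  have hpos : ∀ d : Fin m → ℝ, 0 ≤ d ⬝ᵥ A *ᵥ d := by
    intro d
    have h1 : d ⬝ᵥ A *ᵥ d = (σᵀ *ᵥ d) ⬝ᵥ (σᵀ *ᵥ d) := by
      rw [hA, ← mulVec_mulVec, dotProduct_mulVec, ← mulVec_transpose, dotProduct_comm]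
    rw [h1, dotProduct, ]
    exact Finset.sum_nonneg fun i _ => mul_self_nonneg _
  have hsymm : ∀ v w : Fin m → ℝ, v ⬝ᵥ A *ᵥ w = w ⬝ᵥ A *ᵥ v := by
    intro v w
    rw [dotProduct_mulVec, ← mulVec_transpose]
    have : Aᵀ = A := by rw [hA, transpose_mul, transpose_transpose]
    rw [this, dotProduct_comm]
  have expand : ∀ π d : Fin m → ℝ,
      (π + d) ⬝ᵥ μ - (1/2) * ((π + d) ⬝ᵥ A *ᵥ (π + d)) =
        (π ⬝ᵥ μ - (1/2) * (π ⬝ᵥ A *ᵥ π)) + d ⬝ᵥ (μ - A *ᵥ π)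
          - (1/2) * (d ⬝ᵥ A *ᵥ d) := by
    intro π d
    have h1 : π ⬝ᵥ A *ᵥ d = d ⬝ᵥ A *ᵥ π := hsymm π d
    simp only [mulVec_add, add_dotProduct, dotProduct_add, dotProduct_sub, h1]
    ring
  constructor
  · rintro ⟨π, hc, hmax⟩
    have hm : 0 < m := by
      rcases Nat.eq_zero_or_pos m with h | h
      · exfalso; subst h
        simp [dotProduct] at hc
      · exact h
    -- first-order condition
    have key : ∀ d : Fin m → ℝ, d ⬝ᵥ (fun _ => (1:ℝ)) = 0 →
        d ⬝ᵥ (μ - A *ᵥ π) = 0 := by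
      intro d hd
      by_contra hc0
      set c := d ⬝ᵥ (μ - A *ᵥ π) with hcdef
      set q := d ⬝ᵥ A *ᵥ d with hqdef
      have hq : 0 ≤ q := hpos d
      set t := c / (q + 1) with htdef
      have hcon : (π + t • d) ⬝ᵥ (fun _ => (1:ℝ)) = 1 := by
        rw [add_dotProduct, smul_dotProduct, hd, hc]; ring_nf
      have hle := hmax (π + t • d) hcon
      rw [expand π (t • d)] at hle
      have h2 : (t • d) ⬝ᵥ (μ - A *ᵥ π) = t * c := by
        rw [smul_dotProduct]; rfl
      have h3 : (t • d) ⬝ᵥ A *ᵥ (t • d) = t * (t * q) := by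
        rw [smul_dotProduct, mulVec_smul, dotProduct_smul]; rfl
      rw [h2, h3] at hle
      have hq1 : (0:ℝ) < q + 1 := by linarith
      have hc2 : 0 < c ^ 2 := by positivity
      have heq : t * c - (1/2) * (t * (t * q)) = c ^ 2 * (q + 2) / (2 * (q + 1) ^ 2) := by
        rw [htdef]; field_simp; ring
      have hposnum : 0 < c ^ 2 * (q + 2) := by nlinarith
      have hposden : (0:ℝ) < 2 * (q + 1) ^ 2 := by positivity
      have hgt : 0 < t * c - (1/2) * (t * (t * q)) := by
        rw [heq]; exact div_pos hposnum hposden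
      linarith
    set v : Fin m → ℝ := μ - A *ᵥ π with hv
    set lam : ℝ := (∑ i, v i) / m with hlam
    set d : Fin m → ℝ := v - (fun _ => lam) with hd
    have hdsum : d ⬝ᵥ (fun _ => (1:ℝ)) = 0 := by
      simp only [hd, dotProduct, Pi.sub_apply, mul_one, Finset.sum_sub_distrib,
        Finset.sum_const, Finset.card_univ, Fintype.card_fin, nsmul_eq_mul]
      rw [hlam]
      field_simp
      ring
    have hdv : d ⬝ᵥ v = 0 := key d hdsum
    have hdd : d ⬝ᵥ d = 0 := by
      have h1 : d ⬝ᵥ (fun _ => lam) = lam * (d ⬝ᵥ (fun _ => (1:ℝ))) := by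
        simp [dotProduct, Finset.mul_sum, mul_comm]
      have : d ⬝ᵥ d = d ⬝ᵥ v - d ⬝ᵥ (fun _ => lam) := by
        simp [hd, dotProduct_sub]
      rw [this, hdv, h1, hdsum]; ring
    have hdzero : ∀ i, d i = 0 := by
      intro i
      have h0 : ∑ j, d j * d j = 0 := hdd
      have := (Finset.sum_eq_zero_iff_of_nonneg
        (fun j _ => mul_self_nonneg (d j))).mp h0 i (Finset.mem_univ i)
      exact mul_self_eq_zero.mp this
    have hveq : ∀ i, v i = lam := by
      intro i
      have := hdzero i
      simp only [hd, Pi.sub_apply] at this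
      linarith
    refine ⟨Sum.elim π (fun _ => lam), ?_⟩
    rw [mulVecLin_apply, fromBlocks_mulVec]
    funext x
    cases x with
    | inl i =>
      simp only [Sum.elim_inl, Sum.elim_comp_inl, Sum.elim_comp_inr, Pi.add_apply]
      have hB : (Matrix.of (fun _ _ => (1:ℝ)) : Matrix (Fin m) Unit ℝ) *ᵥ
          (fun _ => lam) = fun _ => lam := by
        funext j; simp [mulVec, dotProduct]
      rw [hB]
      have := hveq i
      simp only [hv, Pi.sub_apply] at this
      linarith
    | inr u =>
      simp only [Sum.elim_inr, Sum.elim_comp_inl, Sum.elim_comp_inr, Pi.add_apply,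
        zero_mulVec, Pi.zero_apply, add_zero]
      have hC : ((Matrix.of (fun _ _ => (1:ℝ)) : Matrix Unit (Fin m) ℝ) *ᵥ π) u
          = π ⬝ᵥ (fun _ => (1:ℝ)) := by
        simp [mulVec, dotProduct, mul_comm]
      rw [hC, hc]
  · rintro ⟨y, hy⟩
    rw [mulVecLin_apply, fromBlocks_mulVec] at hy
    set π : Fin m → ℝ := y ∘ Sum.inl with hπ
    set lam : ℝ := y (Sum.inr ()) with hlamd
    have htop : ∀ i, (A *ᵥ π) i + lam = μ i := by
      intro i
      have := congrFun hy (Sum.inl i)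
      simp only [Sum.elim_inl, Pi.add_apply] at this
      have hB : ((Matrix.of (fun _ _ => (1:ℝ)) : Matrix (Fin m) Unit ℝ) *ᵥ
          (y ∘ Sum.inr)) i = lam := by
        simp [mulVec, dotProduct, hlamd]
      rw [hB] at this
      exact this
    have hbot : π ⬝ᵥ (fun _ => (1:ℝ)) = 1 := by
      have h0 := congrFun hy (Sum.inr ())
      simp only [Sum.elim_inr, Pi.add_apply, zero_mulVec, Pi.zero_apply, add_zero] at h0
      have hC : ((Matrix.of (fun _ _ => (1:ℝ)) : Matrix Unit (Fin m) ℝ) *ᵥ π) ()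
          = π ⬝ᵥ (fun _ => (1:ℝ)) := by
        simp [mulVec, dotProduct, mul_comm]
      rw [hC] at h0
      exact h0
    refine ⟨π, hbot, ?_⟩
    intro π' hc'
    have hdecomp : π' = π + (π' - π) := by ring_nf
    rw [hdecomp, expand]
    have hgrad : (π' - π) ⬝ᵥ (μ - A *ᵥ π) = 0 := by
      have h1 : μ - A *ᵥ π = fun _ => lam := by
        funext i; have := htop i
        simp only [Pi.sub_apply]; linarith
      rw [h1]
      have h2 : (π' - π) ⬝ᵥ (fun _ => lam) = ((π' - π) ⬝ᵥ (fun _ => (1:ℝ))) * lam := by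
        simp [dotProduct, sub_mul, Finset.sum_sub_distrib, Finset.sum_mul]
      rw [h2, sub_dotProduct, hc', hbot]
      ring
    rw [hgrad]
    have := hpos (π' - π)
    linarith
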